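/- Let H : ℝ → ℝ be twice continuously differentiable and let V : ℝ² → ℝ be twice continuously differentiable. Define u(x,t) = V(Φ(x,t)). Then for every (x,t) ∈ ℝ²: ∂²u/∂t²(x,t) − ∂²u/∂x²(x,t) = H′(x+t)·H′(−x+t)·(∂²V/∂τ² − ∂²V/∂ξ²)(Φ(x,t)). In particular, if V solves the wave equation ∂²V/∂τ² = ∂²V/∂ξ², then u solves the wave equation ∂²u/∂t² = ∂²u/∂x². -/

import Mathlib

/-- Partial derivative in the first variable of a function on `ℝ²`. -/
noncomputable def pdx (V : ℝ × ℝ → ℝ) (q : ℝ × ℝ) : ℝ :=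
  deriv (fun s => V (s, q.2)) q.1

/-- Partial derivative in the second variable of a function on `ℝ²`. -/
noncomputable def pdt (V : ℝ × ℝ → ℝ) (q : ℝ × ℝ) : ℝ :=
  deriv (fun s => V (q.1, s)) q.2

/-- The domain transformation `Φ(x,t) = ((H(x+t) - H(-x+t))/2, (H(x+t) + H(-x+t))/2)`. -/
noncomputable def Phi (H : ℝ → ℝ) (q : ℝ × ℝ) : ℝ × ℝ :=
  ((H (q.1 + q.2) - H (-q.1 + q.2)) / 2, (H (q.1 + q.2) + H (-q.1 + q.2)) / 2)

lemma pdx_eq {W : ℝ × ℝ → ℝ} (hW : Differentiable ℝ W) (q : ℝ × ℝ) :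
    pdx W q = fderiv ℝ W q ((1:ℝ), (0:ℝ)) := by
  have hc : HasDerivAt (fun s : ℝ => (s, q.2)) ((1:ℝ), (0:ℝ)) q.1 :=
    (hasDerivAt_id q.1).prodMk (hasDerivAt_const _ _)
  have h := ((hW q).hasFDerivAt.comp_hasDerivAt q.1 (by simpa using hc))
  exact h.deriv

lemma pdt_eq {W : ℝ × ℝ → ℝ} (hW : Differentiable ℝ W) (q : ℝ × ℝ) :
    pdt W q = fderiv ℝ W q ((0:ℝ), (1:ℝ)) := by
  have hc : HasDerivAt (fun s : ℝ => (q.1, s)) ((0:ℝ), (1:ℝ)) q.2 :=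
    (hasDerivAt_const _ _).prodMk (hasDerivAt_id q.2)
  have h := ((hW q).hasFDerivAt.comp_hasDerivAt q.2 (by simpa using hc))
  exact h.deriv

lemma key {W : ℝ × ℝ → ℝ} (hW : Differentiable ℝ W) {γ : ℝ → ℝ × ℝ} {d : ℝ × ℝ} {x : ℝ}
    (hγ : HasDerivAt γ d x) :
    HasDerivAt (fun s => W (γ s)) (pdx W (γ x) * d.1 + pdt W (γ x) * d.2) x := by
  have h := (hW (γ x)).hasFDerivAt.comp_hasDerivAt x hγ
  refine h.congr_deriv ?_
  rw [pdx_eq hW, pdt_eq hW]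
  have e : d = d.1 • ((1:ℝ), (0:ℝ)) + d.2 • ((0:ℝ), (1:ℝ)) := by
    simp [Prod.ext_iff]
  have h2 : (fderiv ℝ W (γ x)) d =
      d.1 * (fderiv ℝ W (γ x)) ((1:ℝ),(0:ℝ)) + d.2 * (fderiv ℝ W (γ x)) ((0:ℝ),(1:ℝ)) := by
    conv_lhs => rw [e]
    simp only [map_add, map_smul, smul_eq_mul]
  rw [h2]; ring

lemma d1gen {f : ℝ → ℝ} (hf : Differentiable ℝ f) (c k x : ℝ) :
    HasDerivAt (fun s => f (c * s + k)) (deriv f (c * x + k) * c) x := by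
  have hin : HasDerivAt (fun s : ℝ => c * s + k) c x := by
    simpa using ((hasDerivAt_id x).const_mul c).add_const k
  exact (hf (c * x + k)).hasDerivAt.comp x hin

lemma dx1 {f : ℝ → ℝ} (hf : Differentiable ℝ f) (x t : ℝ) :
    HasDerivAt (fun s => f (s + t)) (deriv f (x + t)) x := by
  simpa [one_mul] using d1gen hf 1 t x

lemma dx2 {f : ℝ → ℝ} (hf : Differentiable ℝ f) (x t : ℝ) :
    HasDerivAt (fun s => f (-s + t)) (-(deriv f (-x + t))) x := by
  simpa [neg_one_mul, mul_neg_one, mul_comm] using d1gen hf (-1) t x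

lemma dt1 {f : ℝ → ℝ} (hf : Differentiable ℝ f) (x t : ℝ) :
    HasDerivAt (fun s => f (x + s)) (deriv f (x + t)) t := by
  simpa [add_comm] using dx1 hf t x

lemma dt2 {f : ℝ → ℝ} (hf : Differentiable ℝ f) (x t : ℝ) :
    HasDerivAt (fun s => f (-x + s)) (deriv f (-x + t)) t := by
  have := dx1 hf t (-x)
  simpa [add_comm] using this

lemma curve_x {H : ℝ → ℝ} (hH : Differentiable ℝ H) (x t : ℝ) :
    HasDerivAt (fun s => Phi H (s, t))
      ((deriv H (x + t) + deriv H (-x + t)) / 2,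
       (deriv H (x + t) - deriv H (-x + t)) / 2) x := by
  have h1 := dx1 hH x t
  have h2 := dx2 hH x t
  have := ((h1.sub h2).div_const 2).prodMk ((h1.add h2).div_const 2)
  simp only [Pi.sub_apply, Pi.add_apply] at this
  simp only [Phi]
  convert this using 2 <;> ring

lemma curve_t {H : ℝ → ℝ} (hH : Differentiable ℝ H) (x t : ℝ) :
    HasDerivAt (fun s => Phi H (x, s))
      ((deriv H (x + t) - deriv H (-x + t)) / 2,
       (deriv H (x + t) + deriv H (-x + t)) / 2) t := by
  have h1 := dt1 hH x t
  have h2 := dt2 hH x t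
  have := ((h1.sub h2).div_const 2).prodMk ((h1.add h2).div_const 2)
  simp only [Pi.sub_apply, Pi.add_apply] at this
  simp only [Phi]
  convert this using 2 <;> ring

lemma deriv_contDiff {H : ℝ → ℝ} (hH : ContDiff ℝ 2 H) : ContDiff ℝ 1 (deriv H) := by
  have h2 : ContDiff ℝ (1 + 1) H := by rw [one_add_one_eq_two]; exact hH
  exact (contDiff_succ_iff_deriv.mp h2).2.2

lemma pdx_contDiff {V : ℝ × ℝ → ℝ} (hV : ContDiff ℝ 2 V) : ContDiff ℝ 1 (pdx V) := by
  have h2 : ContDiff ℝ (1 + 1) V := by rw [one_add_one_eq_two]; exact hV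
  have h := (contDiff_succ_iff_fderiv.mp h2).2.2
  have hd : Differentiable ℝ V := hV.differentiable two_ne_zero
  have e : pdx V = fun q => fderiv ℝ V q ((1:ℝ), (0:ℝ)) := funext fun q => pdx_eq hd q
  rw [e]
  exact h.clm_apply contDiff_const

lemma pdt_contDiff {V : ℝ × ℝ → ℝ} (hV : ContDiff ℝ 2 V) : ContDiff ℝ 1 (pdt V) := by
  have h2 : ContDiff ℝ (1 + 1) V := by rw [one_add_one_eq_two]; exact hV
  have h := (contDiff_succ_iff_fderiv.mp h2).2.2
  have hd : Differentiable ℝ V := hV.differentiable two_ne_zero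
  have e : pdt V = fun q => fderiv ℝ V q ((0:ℝ), (1:ℝ)) := funext fun q => pdt_eq hd q
  rw [e]
  exact h.clm_apply contDiff_const

noncomputable def alph (H : ℝ → ℝ) (q : ℝ × ℝ) : ℝ :=
  (deriv H (q.1 + q.2) + deriv H (-q.1 + q.2)) / 2
noncomputable def bet (H : ℝ → ℝ) (q : ℝ × ℝ) : ℝ :=
  (deriv H (q.1 + q.2) - deriv H (-q.1 + q.2)) / 2

lemma pdx_comp {H : ℝ → ℝ} {W : ℝ × ℝ → ℝ} (hH : Differentiable ℝ H)
    (hW : Differentiable ℝ W) (x t : ℝ) :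
    pdx (fun q => W (Phi H q)) (x, t) =
      pdx W (Phi H (x, t)) * alph H (x, t) + pdt W (Phi H (x, t)) * bet H (x, t) := by
  have h := key hW (curve_x hH x t)
  have := h.deriv
  simpa [pdx, alph, bet] using this

lemma pdt_comp {H : ℝ → ℝ} {W : ℝ × ℝ → ℝ} (hH : Differentiable ℝ H)
    (hW : Differentiable ℝ W) (x t : ℝ) :
    pdt (fun q => W (Phi H q)) (x, t) =
      pdx W (Phi H (x, t)) * bet H (x, t) + pdt W (Phi H (x, t)) * alph H (x, t) := by
  have h := key hW (curve_t hH x t)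
  have := h.deriv
  simpa [pdt, alph, bet] using this

/-- for `u = V ∘ Φ`,
`∂²u/∂t² - ∂²u/∂x² = H'(x+t)·H'(-x+t)·(∂²V/∂τ² - ∂²V/∂ξ²) ∘ Φ`; in particular if `V`
solves the wave equation then so does `u`. -/
theorem stmt7 (H : ℝ → ℝ) (hH : ContDiff ℝ 2 H) (V : ℝ × ℝ → ℝ) (hV : ContDiff ℝ 2 V)
    (u : ℝ × ℝ → ℝ) (hu : ∀ q : ℝ × ℝ, u q = V (Phi H q)) :
    (∀ x t : ℝ,
      pdt (pdt u) (x, t) - pdx (pdx u) (x, t) =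
        deriv H (x + t) * deriv H (-x + t) *
          (pdt (pdt V) (Phi H (x, t)) - pdx (pdx V) (Phi H (x, t)))) ∧
    ((∀ q : ℝ × ℝ, pdt (pdt V) q = pdx (pdx V) q) →
      ∀ q : ℝ × ℝ, pdt (pdt u) q = pdx (pdx u) q) := by
  have hHd : Differentiable ℝ H := hH.differentiable two_ne_zero
  have hVd : Differentiable ℝ V := hV.differentiable two_ne_zero
  have hg : ContDiff ℝ 1 (deriv H) := deriv_contDiff hH
  have hgd : Differentiable ℝ (deriv H) := hg.differentiable one_ne_zero
  have hW1 : Differentiable ℝ (pdx V) := (pdx_contDiff hV).differentiable one_ne_zero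
  have hW2 : Differentiable ℝ (pdt V) := (pdt_contDiff hV).differentiable one_ne_zero
  have hueq : u = fun q => V (Phi H q) := funext hu
  subst hueq
  have main : ∀ x t : ℝ,
      pdt (pdt fun q => V (Phi H q)) (x, t) - pdx (pdx fun q => V (Phi H q)) (x, t) =
        deriv H (x + t) * deriv H (-x + t) *
          (pdt (pdt V) (Phi H (x, t)) - pdx (pdx V) (Phi H (x, t))) := by
    intro x t
    -- first derivatives as functions
    have e1 : (pdx fun q => V (Phi H q)) =
        fun q => pdx V (Phi H q) * alph H q + pdt V (Phi H q) * bet H q :=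
      funext fun q => pdx_comp hHd hVd q.1 q.2
    have e2 : (pdt fun q => V (Phi H q)) =
        fun q => pdx V (Phi H q) * bet H q + pdt V (Phi H q) * alph H q :=
      funext fun q => pdt_comp hHd hVd q.1 q.2
    rw [e1, e2]
    set a := deriv H (x + t) with ha
    set b := deriv H (-x + t) with hb
    set A := deriv (deriv H) (x + t) with hA
    set B := deriv (deriv H) (-x + t) with hB
    -- coefficient derivatives in x
    have hax : HasDerivAt (fun s => alph H (s, t)) ((A - B) / 2) x := by
      have := ((dx1 hgd x t).add (dx2 hgd x t)).div_const 2
      simp only [Pi.sub_apply, Pi.add_apply] at this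
      simp only [alph]
      refine this.congr_deriv ?_
      all_goals ring
    have hbx : HasDerivAt (fun s => bet H (s, t)) ((A + B) / 2) x := by
      have := ((dx1 hgd x t).sub (dx2 hgd x t)).div_const 2
      simp only [Pi.sub_apply, Pi.add_apply] at this
      simp only [bet]
      refine this.congr_deriv ?_
      all_goals ring
    have hat : HasDerivAt (fun s => alph H (x, s)) ((A + B) / 2) t := by
      have := ((dt1 hgd x t).add (dt2 hgd x t)).div_const 2
      simp only [Pi.sub_apply, Pi.add_apply] at this
      simp only [alph]
      convert this using 1
      all_goals ring
    have hbt : HasDerivAt (fun s => bet H (x, s)) ((A - B) / 2) t := by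
      have := ((dt1 hgd x t).sub (dt2 hgd x t)).div_const 2
      simp only [Pi.sub_apply, Pi.add_apply] at this
      simp only [bet]
      convert this using 1
      all_goals ring
    have k1x : HasDerivAt (fun s => pdx V (Phi H (s, t)))
        (pdx (pdx V) (Phi H (x, t)) * ((a + b) / 2) + pdt (pdx V) (Phi H (x, t)) * ((a - b) / 2)) x := by
      simpa using key hW1 (curve_x hHd x t)
    have k2x : HasDerivAt (fun s => pdt V (Phi H (s, t)))
        (pdx (pdt V) (Phi H (x, t)) * ((a + b) / 2) + pdt (pdt V) (Phi H (x, t)) * ((a - b) / 2)) x := by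
      simpa using key hW2 (curve_x hHd x t)
    have k1t : HasDerivAt (fun s => pdx V (Phi H (x, s)))
        (pdx (pdx V) (Phi H (x, t)) * ((a - b) / 2) + pdt (pdx V) (Phi H (x, t)) * ((a + b) / 2)) t := by
      simpa using key hW1 (curve_t hHd x t)
    have k2t : HasDerivAt (fun s => pdt V (Phi H (x, s)))
        (pdx (pdt V) (Phi H (x, t)) * ((a - b) / 2) + pdt (pdt V) (Phi H (x, t)) * ((a + b) / 2)) t := by
      simpa using key hW2 (curve_t hHd x t)
    have hx2 := (((k1x.mul hax).add (k2x.mul hbx))).deriv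
    have ht2 := (((k1t.mul hbt).add (k2t.mul hat))).deriv
    have Ex : pdx (fun q => pdx V (Phi H q) * alph H q + pdt V (Phi H q) * bet H q) (x, t) =
        (pdx (pdx V) (Phi H (x, t)) * ((a + b) / 2) + pdt (pdx V) (Phi H (x, t)) * ((a - b) / 2)) * alph H (x, t)
          + pdx V (Phi H (x, t)) * ((A - B) / 2)
          + ((pdx (pdt V) (Phi H (x, t)) * ((a + b) / 2) + pdt (pdt V) (Phi H (x, t)) * ((a - b) / 2)) * bet H (x, t)
          + pdt V (Phi H (x, t)) * ((A + B) / 2)) := by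
      simpa [pdx, Pi.add_def, Pi.mul_def] using hx2
    have Et : pdt (fun q => pdx V (Phi H q) * bet H q + pdt V (Phi H q) * alph H q) (x, t) =
        (pdx (pdx V) (Phi H (x, t)) * ((a - b) / 2) + pdt (pdx V) (Phi H (x, t)) * ((a + b) / 2)) * bet H (x, t)
          + pdx V (Phi H (x, t)) * ((A - B) / 2)
          + ((pdx (pdt V) (Phi H (x, t)) * ((a - b) / 2) + pdt (pdt V) (Phi H (x, t)) * ((a + b) / 2)) * alph H (x, t)
          + pdt V (Phi H (x, t)) * ((A + B) / 2)) := by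
      simpa [pdt, Pi.add_def, Pi.mul_def] using ht2
    rw [Ex, Et]
    have hal : alph H (x, t) = (a + b) / 2 := rfl
    have hbe : bet H (x, t) = (a - b) / 2 := rfl
    rw [hal, hbe]
    ring
  refine ⟨main, fun hwave q => ?_⟩
  have := main q.1 q.2
  rw [hwave (Phi H (q.1, q.2))] at this
  simpa [sub_eq_zero] using this
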